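/- For every state i and every positive integer θ, writing Ê = E_i[min(T_i, θ)], one has 1/Ê − π_i = (π_i/Ê) · Σ_{q ∈ Σ, q ≠ i} P_i(X_θ = q and T_i > θ) · E_q[T_i]. (This is the identity 1/E_i[T̂_i^{(t)}] − π_i = P_i(T_i > θ)·Γ_i / E_i[T̂_i^{(t)}] of the paper, with Γ_i = Σ_{q≠i} P_i(X_θ = q | T_i > θ)(Z_ii − Z_qi) rewritten via the fundamental-matrix identity Z_ii − Z_qi = π_i E_q[T_i].) -/

import Mathlib

open MeasureTheory ProbabilityTheory Finset Set
open scoped ENNReal NNReal Classical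

namespace LocalStationary

noncomputable section

/-- First return time (≥ 1) of a trajectory `f` to the state `i`, valued in `ℕ∞`
(it equals `⊤` if the trajectory never returns to `i`). -/
def hit {S : Type*} (i : S) (f : ℕ → S) : ℕ∞ :=
  sInf {n : ℕ∞ | ∃ m : ℕ, n = m ∧ 1 ≤ m ∧ f m = i}

/-- Truncated return time `min(T_i, θ)` as a natural number. -/
def truncHit {S : Type*} (i : S) (θ : ℕ) (f : ℕ → S) : ℕ :=
  (min (hit i f) (θ : ℕ∞)).toNat

/-- Number of visits to `j` among the first `min(T_i, θ)` steps of the trajectory. -/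
def visits {S : Type*} (i j : S) (θ : ℕ) (f : ℕ → S) : ℕ :=
  ((Finset.Icc 1 (truncHit i θ f)).filter fun s => f s = j).card

/-- A discrete-time time-homogeneous Markov chain on a state space `S`, described by
the laws `μ x` of its trajectories started at each state `x`, together with its
transition matrix `trans`. -/
structure Chain (S : Type*) [MeasurableSpace S] where
  μ : S → Measure (ℕ → S)
  isProb : ∀ x, IsProbabilityMeasure (μ x)
  start : ∀ x, μ x {f | f 0 = x} = 1
  trans : S → S → ℝ≥0∞
  trans_sum : ∀ x, ∑' y, trans x y = 1
  markov : ∀ x (n : ℕ) (s : ℕ → S),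
    μ x {f | ∀ k ≤ n + 1, f k = s k} =
      μ x {f | ∀ k ≤ n, f k = s k} * trans (s n) (s (n + 1))

namespace Chain

variable {S : Type*} [MeasurableSpace S]

/-- Irreducibility: from every state one can reach every other state. -/
def Irreducible (C : Chain S) : Prop :=
  ∀ x y : S, ∃ n : ℕ, 0 < C.μ x {f | f n = y}

/-- Positive recurrence: the return time to each state is almost surely finite and
has finite expectation. -/
def PositiveRecurrent (C : Chain S) : Prop :=
  ∀ x : S, C.μ x {f | hit x f = ⊤} = 0 ∧
    Integrable (fun f => ((hit x f).toNat : ℝ)) (C.μ x)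

/-- Aperiodicity: for each state, the only common divisor of the possible return
times is `1`. -/
def Aperiodic (C : Chain S) : Prop :=
  ∀ x : S, ∀ d : ℕ, (∀ n : ℕ, 1 ≤ n → 0 < C.μ x {f | f n = x} → d ∣ n) → d ∣ 1

/-- `E_x[T_i]`, the expected hitting time of `i` starting from `x`. -/
def ERet (C : Chain S) (x i : S) : ℝ :=
  ∫ f, ((hit i f).toNat : ℝ) ∂ C.μ x

/-- The stationary probability `π_i = 1 / E_i[T_i]`. -/
def statPi (C : Chain S) (i : S) : ℝ := (C.ERet i i)⁻¹

/-- The truncated mean `E_i[min(T_i, θ)]`. -/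
def EThat (C : Chain S) (i : S) (θ : ℕ) : ℝ :=
  ∫ f, (truncHit i θ f : ℝ) ∂ C.μ i

/-- `E_i[F̂_j] = E_i[Σ_{s=1}^{min(T_i,θ)} 1{X_s = j}]`. -/
def EVisits (C : Chain S) (i j : S) (θ : ℕ) : ℝ :=
  ∫ f, (visits i j θ f : ℝ) ∂ C.μ i

/-- `P_i(T_i > k)`, as a real number. -/
def tailP (C : Chain S) (i : S) (k : ℕ) : ℝ :=
  (C.μ i {f | (k : ℕ∞) < hit i f}).toReal

/-- The maximal hitting time `H_i = max_x E_x[T_i]`. -/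
def maxHit (C : Chain S) (i : S) : ℝ := ⨆ x : S, C.ERet x i

/-- Entry `Z_{jk} = Σ_{t=0}^∞ (P^{(t)}_{jk} − π_k)` of the fundamental matrix. -/
def Zfun (C : Chain S) (j k : S) : ℝ :=
  ∑' t : ℕ, ((C.μ j {f | f t = k}).toReal - C.statPi k)

/-- `Z_max(i) = max_k |Z_{ki}|`. -/
def Zmax (C : Chain S) (i : S) : ℝ := ⨆ k : S, |C.Zfun k i|

end Chain




section HitAux

variable {S : Type*} {i : S} {f : ℕ → S} {θ : ℕ}


variable {S : Type*} {i : S} {f : ℕ → S}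

lemma one_le_hit (i : S) (f : ℕ → S) : 1 ≤ hit i f := by
  refine le_sInf fun b hb => ?_
  obtain ⟨m, rfl, hm, -⟩ := hb
  exact_mod_cast hm

lemma hit_le_coe_iff {n : ℕ} : hit i f ≤ (n : ℕ∞) ↔ ∃ m, 1 ≤ m ∧ m ≤ n ∧ f m = i := by
  constructor
  · intro h
    by_contra hc
    push_neg at hc
    have : ((n+1 : ℕ) : ℕ∞) ≤ hit i f := by
      refine le_sInf fun b hb => ?_
      obtain ⟨m, rfl, hm, hfm⟩ := hb
      have : ¬ m ≤ n := fun hle => hc m hm hle hfm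
      exact_mod_cast by omega
    have := le_trans this h
    exact_mod_cast (by omega : ¬ (n+1 ≤ n)) (by exact_mod_cast this)
  · rintro ⟨m, hm1, hmn, hfm⟩
    exact le_trans (sInf_le ⟨m, rfl, hm1, hfm⟩) (by exact_mod_cast hmn)

lemma hit_eq_top_iff : hit i f = ⊤ ↔ ∀ m, 1 ≤ m → f m ≠ i := by
  constructor
  · intro h m hm hfm
    have : hit i f ≤ (m : ℕ∞) := sInf_le ⟨m, rfl, hm, hfm⟩
    rw [h] at this
    simp at this
  · intro h
    rw [hit, sInf_eq_top]
    rintro b ⟨m, rfl, hm, hfm⟩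
    exact absurd hfm (h m hm)

lemma hit_eq_of {m₀ : ℕ} (h1 : 1 ≤ m₀) (h2 : f m₀ = i)
    (h3 : ∀ m, 1 ≤ m → f m = i → m₀ ≤ m) : hit i f = (m₀ : ℕ∞) := by
  refine le_antisymm (sInf_le ⟨m₀, rfl, h1, h2⟩) (le_sInf ?_)
  rintro b ⟨m, rfl, hm, hfm⟩
  exact_mod_cast h3 m hm hfm

lemma hit_shift {θ : ℕ} (hθ : (θ : ℕ∞) < hit i f) :
    hit i f = (θ : ℕ∞) + hit i (fun k => f (θ + k)) := by
  by_cases h : ∃ m, 1 ≤ m ∧ f m = i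
  · classical
    set m₀ := Nat.find h with hm₀
    obtain ⟨hm1, hfm⟩ := Nat.find_spec h
    have hmin : ∀ m, 1 ≤ m → f m = i → m₀ ≤ m := fun m hm hfm' =>
      Nat.find_min' h ⟨hm, hfm'⟩
    have hhit : hit i f = (m₀ : ℕ∞) := hit_eq_of hm1 hfm hmin
    have hθm : θ < m₀ := by
      rw [hhit] at hθ; exact_mod_cast hθ
    have hshift : hit i (fun k => f (θ + k)) = ((m₀ - θ : ℕ) : ℕ∞) := by
      refine hit_eq_of (by omega) (by show f (θ + (m₀ - θ)) = i; rw [show θ + (m₀ - θ) = m₀ by omega]; exact hfm) ?_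
      intro m hm hfm'
      have : m₀ ≤ θ + m := hmin (θ + m) (by omega) hfm'
      omega
    rw [hhit, hshift]
    exact_mod_cast (by omega : m₀ = θ + (m₀ - θ))
  · push_neg at h
    have h1 : hit i f = ⊤ := hit_eq_top_iff.2 fun m hm => h m hm
    have h2 : hit i (fun k => f (θ + k)) = ⊤ :=
      hit_eq_top_iff.2 fun m hm => h (θ + m) (by omega)
    rw [h1, h2, add_top]



lemma truncHit_le : truncHit i θ f ≤ θ := by
  rcases le_total (hit i f) (θ : ℕ∞) with h | h
  · rw [truncHit, min_eq_left h]
    exact_mod_cast ENat.toNat_le_of_le_coe h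
  · rw [truncHit, min_eq_right h]; simp

lemma one_le_truncHit (hθ : 1 ≤ θ) : 1 ≤ truncHit i θ f := by
  have h1 : 1 ≤ min (hit i f) (θ : ℕ∞) :=
    le_min (one_le_hit i f) (by exact_mod_cast hθ)
  have h2 : min (hit i f) (θ : ℕ∞) ≠ ⊤ :=
    ne_top_of_le_ne_top (by simp) (min_le_right _ _)
  rw [truncHit]
  rw [← ENat.coe_toNat h2] at h1
  exact_mod_cast h1

lemma truncHit_of_le (h : hit i f ≤ (θ : ℕ∞)) :
    (truncHit i θ f : ℕ∞) = hit i f := by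
  rw [truncHit, min_eq_left h]
  exact ENat.coe_toNat (ne_top_of_le_ne_top (by simp) h)

lemma truncHit_of_lt (h : (θ : ℕ∞) < hit i f) : truncHit i θ f = θ := by
  rw [truncHit, min_eq_right h.le]; simp

lemma N_decomp (hθ : 1 ≤ θ) (hne : hit i f ≠ ⊤) :
    (((hit i f).toNat : ℕ) : ℝ≥0∞) = (truncHit i θ f : ℝ≥0∞) +
      Set.indicator {g : ℕ → S | (θ : ℕ∞) < hit i g}
        (fun g => (((hit i (fun k => g (θ + k))).toNat : ℕ) : ℝ≥0∞)) f := by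
  rcases le_or_gt (hit i f) (θ : ℕ∞) with h | h
  · rw [Set.indicator_of_notMem (by simpa using h), add_zero]
    have := truncHit_of_le h
    have : truncHit i θ f = (hit i f).toNat := by
      rw [truncHit, min_eq_left h]
    rw [this]
  · rw [Set.indicator_of_mem (by exact h), truncHit_of_lt h]
    have hs := hit_shift h
    have hsne : hit i (fun k => f (θ + k)) ≠ ⊤ := by
      intro hc; rw [hc, add_top] at hs; exact hne hs
    rw [hs]
    rw [← ENat.coe_toNat hsne]
    norm_cast

end HitAux

section Meas
variable {S : Type*} [MeasurableSpace S] [MeasurableSingletonClass S] [Countable S] (i : S)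

variable {S : Type*} [MeasurableSpace S] [MeasurableSingletonClass S] [Countable S] (i : S)

lemma measurableSet_eval (m : ℕ) (A : Set S) : MeasurableSet {f : ℕ → S | f m ∈ A} :=
  (measurable_pi_apply m) (A.to_countable.measurableSet)

lemma measurableSet_hit_le (n : ℕ) : MeasurableSet {f : ℕ → S | hit i f ≤ (n : ℕ∞)} := by
  have : {f : ℕ → S | hit i f ≤ (n : ℕ∞)} = ⋃ m ∈ Finset.Icc 1 n, {f | f m = i} := by
    ext f
    simp only [Set.mem_setOf_eq, Set.mem_iUnion, Finset.mem_Icc, hit_le_coe_iff]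
    constructor
    · rintro ⟨m, h1, h2, h3⟩; exact ⟨m, ⟨h1, h2⟩, h3⟩
    · rintro ⟨m, ⟨h1, h2⟩, h3⟩; exact ⟨m, h1, h2, h3⟩
  rw [this]
  exact MeasurableSet.biUnion (Finset.Icc 1 n).countable_toSet
    fun m _ => measurableSet_eval m {i}

lemma measurableSet_hit_eq (c : ℕ∞) : MeasurableSet {f : ℕ → S | hit i f = c} := by
  induction c using ENat.recTopCoe with
  | top =>
    have : {f : ℕ → S | hit i f = ⊤} = (⋃ n : ℕ, {f | hit i f ≤ (n : ℕ∞)})ᶜ := by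
      ext f
      simp only [Set.mem_compl_iff, Set.mem_iUnion, Set.mem_setOf_eq, not_exists]
      constructor
      · intro h n hn
        rw [h] at hn
        exact (by simp : ¬ (⊤ : ℕ∞) ≤ (n : ℕ∞)) hn
      · intro h
        by_contra hc
        exact h (hit i f).toNat (ENat.coe_toNat hc).ge
    rw [this]
    exact (MeasurableSet.iUnion fun n => measurableSet_hit_le i n).compl
  | coe n =>
    have : {f : ℕ → S | hit i f = (n : ℕ∞)} =
        {f | hit i f ≤ (n : ℕ∞)} \ ⋃ m ∈ Finset.range n, {f | hit i f ≤ (m : ℕ∞)} := by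
      ext f
      simp only [Set.mem_diff, Set.mem_setOf_eq, Set.mem_iUnion, Finset.mem_range, not_exists]
      constructor
      · intro h
        refine ⟨le_of_eq h, fun m hm hle => ?_⟩
        rw [h] at hle
        exact absurd (by exact_mod_cast hle) (by omega)
      · rintro ⟨h1, h2⟩
        have hne : hit i f ≠ ⊤ := ne_top_of_le_ne_top (by simp) h1
        have hk : ((hit i f).toNat : ℕ∞) = hit i f := ENat.coe_toNat hne
        set k := (hit i f).toNat with hkdef
        rw [← hk] at h1 ⊢
        have hkn : k ≤ n := by exact_mod_cast h1
        rcases eq_or_lt_of_le hkn with h | h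
        · exact_mod_cast h
        · exact absurd (by rw [← hk]) (fun hh => h2 k h hh)
    rw [this]
    exact (measurableSet_hit_le i n).diff
      (MeasurableSet.biUnion (Finset.range n).countable_toSet fun m _ => measurableSet_hit_le i m)

lemma measurable_comp_hit {α : Type*} [MeasurableSpace α] (g : ℕ∞ → α) :
    Measurable (fun f : ℕ → S => g (hit i f)) := by
  intro A _
  have : (fun f : ℕ → S => g (hit i f)) ⁻¹' A = ⋃ c ∈ {c : ℕ∞ | g c ∈ A}, {f | hit i f = c} := by
    ext f; simp [Set.mem_preimage]
  rw [this]
  exact MeasurableSet.biUnion (Set.to_countable _) fun c _ => measurableSet_hit_eq i c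

lemma measurable_shift (θ : ℕ) : Measurable (fun f : ℕ → S => (fun k => f (θ + k))) := by
  exact measurable_pi_iff.2 fun k => measurable_pi_apply (θ + k)

lemma measurableSet_retSet (θ : ℕ) (q : S) :
    MeasurableSet {f : ℕ → S | f θ = q ∧ (θ : ℕ∞) < hit i f} := by
  have : {f : ℕ → S | f θ = q ∧ (θ : ℕ∞) < hit i f} =
      {f : ℕ → S | f θ ∈ ({q} : Set S)} ∩ {f | hit i f ≤ (θ : ℕ∞)}ᶜ := by
    ext f; simp [not_le]
  rw [this]
  exact (measurableSet_eval θ {q}).inter (measurableSet_hit_le i θ).compl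


end Meas

section Cyl

variable {S : Type*} [MeasurableSpace S] [MeasurableSingletonClass S] [Countable S]

/-- cylinder set -/
def cyl (n : ℕ) (s : ℕ → S) : Set (ℕ → S) := {f | ∀ k ≤ n, f k = s k}

lemma measurableSet_cyl (n : ℕ) (s : ℕ → S) : MeasurableSet (cyl n s) := by
  have : cyl n s = ⋂ k ∈ Finset.range (n+1), {f : ℕ → S | f k = s k} := by
    ext f
    simp only [cyl, Set.mem_setOf_eq, Set.mem_iInter, Finset.mem_range]
    exact ⟨fun h k hk => h k (by omega), fun h k hk => h k (by omega)⟩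
  rw [this]
  exact MeasurableSet.biInter (Finset.range (n+1)).countable_toSet
    fun k _ => by
      have : {f : ℕ → S | f k = s k} = (fun f : ℕ → S => f k) ⁻¹' {s k} := rfl
      rw [this]
      exact (measurable_pi_apply k) (measurableSet_singleton (s k))

/-- extension of a finite vector to ℕ -/
def extv (n : ℕ) (v : Fin (n+1) → S) : ℕ → S :=
  fun k => v ⟨min k n, Nat.lt_succ_of_le (min_le_right k n)⟩

lemma extv_eq (n : ℕ) (v : Fin (n+1) → S) {k : ℕ} (hk : k ≤ n) :
    extv n v k = v ⟨k, Nat.lt_succ_of_le hk⟩ := by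
  simp only [extv]
  congr 1
  exact Fin.ext (min_eq_left hk)

/-- the collection of cylinders -/
def cylSet (S : Type*) : Set (Set (ℕ → S)) := {A | ∃ n s, A = cyl n s}

lemma isPiSystem_cylSet : IsPiSystem (cylSet S) := by
  rintro A ⟨n, s, rfl⟩ B ⟨m, t, rfl⟩ hne
  rcases le_total n m with h | h
  · obtain ⟨g, hg⟩ := hne
    refine ⟨m, t, ?_⟩
    ext f
    simp only [Set.mem_inter_iff, cyl, Set.mem_setOf_eq]
    constructor
    · rintro ⟨-, h2⟩; exact h2
    · intro h2
      refine ⟨fun k hk => ?_, h2⟩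
      rw [h2 k (le_trans hk h), ← hg.2 k (le_trans hk h), hg.1 k hk]
  · obtain ⟨g, hg⟩ := hne
    refine ⟨n, s, ?_⟩
    ext f
    simp only [Set.mem_inter_iff, cyl, Set.mem_setOf_eq]
    constructor
    · rintro ⟨h1, -⟩; exact h1
    · intro h1
      refine ⟨h1, fun k hk => ?_⟩
      rw [h1 k (le_trans hk h), ← hg.1 k (le_trans hk h), hg.2 k hk]

lemma generateFrom_cylSet :
    (MeasurableSpace.pi : MeasurableSpace (ℕ → S)) = MeasurableSpace.generateFrom (cylSet S) := by
  refine le_antisymm ?_ ?_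
  · rw [MeasurableSpace.pi]
    refine iSup_le fun m => ?_
    refine measurable_iff_comap_le.1 ?_
    intro A _
    have : (fun f : ℕ → S => f m) ⁻¹' A =
        ⋃ (v : Fin (m+1) → S) (_ : v ⟨m, Nat.lt_succ_self m⟩ ∈ A), cyl m (extv m v) := by
      ext f
      simp only [Set.mem_preimage, Set.mem_iUnion]
      constructor
      · intro hf
        refine ⟨fun k => f k, ?_, fun k hk => ?_⟩
        · exact hf
        · rw [extv_eq m _ hk]
      · rintro ⟨v, hv, hf⟩
        have := hf m le_rfl
        rw [extv_eq m v le_rfl] at this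
        rw [this]
        exact hv
    rw [this]
    exact MeasurableSet.iUnion fun v => MeasurableSet.iUnion fun _ =>
      MeasurableSpace.measurableSet_generateFrom ⟨m, extv m v, rfl⟩
  · refine MeasurableSpace.generateFrom_le ?_
    rintro A ⟨n, s, rfl⟩
    exact measurableSet_cyl n s


variable (C : Chain S)

lemma start_ne (x y : S) (h : y ≠ x) : C.μ x {f | f 0 = y} = 0 := by
  haveI := C.isProb x
  have hsub : {f : ℕ → S | f 0 = y} ⊆ {f : ℕ → S | f 0 = x}ᶜ := by
    intro f hf hx
    exact h (hf ▸ hx ▸ rfl)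
  have hmeas : MeasurableSet {f : ℕ → S | f 0 = x} := by
    have : {f : ℕ → S | f 0 = x} = (fun f : ℕ → S => f 0) ⁻¹' {x} := rfl
    rw [this]
    exact (measurable_pi_apply 0) (measurableSet_singleton x)
  have hc : C.μ x {f : ℕ → S | f 0 = x}ᶜ = 0 := by
    rw [measure_compl hmeas (measure_ne_top _ _), C.start x, measure_univ]
    simp
  exact le_antisymm (le_trans (measure_mono hsub) hc.le) zero_le

lemma start_eq (x : S) (s : ℕ → S) :
    C.μ x {f | f 0 = s 0} = if s 0 = x then 1 else 0 := by
  split_ifs with h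
  · rw [h]; exact C.start x
  · exact start_ne C x (s 0) h

lemma measure_cyl (x : S) (n : ℕ) (s : ℕ → S) :
    C.μ x (cyl n s) = (if s 0 = x then 1 else 0) *
      ∏ k ∈ Finset.range n, C.trans (s k) (s (k+1)) := by
  induction n with
  | zero =>
    simp only [Finset.range_zero, Finset.prod_empty, mul_one]
    have : cyl 0 s = {f : ℕ → S | f 0 = s 0} := by
      ext f
      simp only [cyl, Set.mem_setOf_eq]
      exact ⟨fun h => h 0 le_rfl, fun h k hk => by rw [Nat.le_zero.1 hk]; exact h⟩
    rw [this, start_eq]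
  | succ n ih =>
    have := C.markov x n s
    rw [show {f : ℕ → S | ∀ k ≤ n + 1, f k = s k} = cyl (n+1) s from rfl,
      show {f : ℕ → S | ∀ k ≤ n, f k = s k} = cyl n s from rfl] at this
    rw [this, ih, Finset.prod_range_succ, mul_assoc]


lemma measure_cyl_inter_shift (x : S) (θ n : ℕ) (v t : ℕ → S) (h : v θ = t 0) :
    C.μ x (cyl θ v ∩ (fun f : ℕ → S => fun k => f (θ + k)) ⁻¹' cyl n t) =
      C.μ x (cyl θ v) * ∏ k ∈ Finset.range n, C.trans (t k) (t (k+1)) := by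
  classical
  set u : ℕ → S := fun k => if k ≤ θ then v k else t (k - θ) with hu
  have hset : cyl θ v ∩ (fun f : ℕ → S => fun k => f (θ + k)) ⁻¹' cyl n t = cyl (θ+n) u := by
    ext f
    simp only [Set.mem_inter_iff, Set.mem_preimage, cyl, Set.mem_setOf_eq]
    constructor
    · rintro ⟨h1, h2⟩ k hk
      by_cases hkθ : k ≤ θ
      · rw [hu]; simp only [hkθ, if_pos]; exact h1 k hkθ
      · have h3 := h2 (k - θ) (by omega : k - θ ≤ n)
        rw [show θ + (k - θ) = k by omega] at h3
        show f k = if k ≤ θ then v k else t (k - θ)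
        rw [if_neg hkθ]
        exact h3
    · intro hf
      constructor
      · intro k hk
        have := hf k (by omega)
        rw [hu] at this
        simpa [hk] using this
      · intro k hk
        have this1 : f (θ + k) = if θ + k ≤ θ then v (θ + k) else t (θ + k - θ) :=
          hf (θ + k) (by omega)
        rcases Nat.eq_zero_or_pos k with rfl | hk0
        · rw [if_pos (by omega)] at this1
          rw [Nat.add_zero] at this1 ⊢
          rw [this1, h]
        · rw [if_neg (by omega)] at this1
          rw [this1]
          congr 1
          omega
  rw [hset, measure_cyl, measure_cyl]
  have hu0 : u 0 = v 0 := by simp [hu]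
  rw [hu0, Finset.prod_range_add, mul_assoc]
  congr 2
  · refine Finset.prod_congr rfl fun k hk => ?_
    rw [Finset.mem_range] at hk
    have h1 : u k = v k := by simp [hu, (by omega : k ≤ θ)]
    have h2 : u (k+1) = v (k+1) := by simp [hu, (by omega : k + 1 ≤ θ)]
    rw [h1, h2]
  · refine Finset.prod_congr rfl fun k hk => ?_
    have h1 : u (θ + k) = t k := by
      show (if θ + k ≤ θ then v (θ + k) else t (θ + k - θ)) = t k
      rcases Nat.eq_zero_or_pos k with rfl | hk0
      · rw [if_pos (by omega), Nat.add_zero, h]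
      · rw [if_neg (by omega)]
        congr 1
        omega
    have h2 : u (θ + k + 1) = t (k+1) := by
      show (if θ + k + 1 ≤ θ then v (θ + k + 1) else t (θ + k + 1 - θ)) = t (k+1)
      rw [if_neg (by omega)]
      congr 1
      omega
    rw [h1, h2]

/-- piece of the return event -/
def pieceSet (i q : S) (θ : ℕ) (v : Fin (θ+1) → S) : Set (ℕ → S) :=
  if extv θ v θ = q ∧ (∀ m, 1 ≤ m → m ≤ θ → extv θ v m ≠ i) then cyl θ (extv θ v) else ∅

lemma measurableSet_pieceSet (i q : S) (θ : ℕ) (v : Fin (θ+1) → S) :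
    MeasurableSet (pieceSet i q θ v) := by
  rw [pieceSet]
  split_ifs
  · exact measurableSet_cyl θ (extv θ v)
  · exact MeasurableSet.empty

lemma pieceSet_disjoint (i q : S) (θ : ℕ) :
    Pairwise (Function.onFun Disjoint (pieceSet i q θ)) := by
  intro v w hvw
  rw [Function.onFun, Set.disjoint_left]
  intro f hfv hfw
  rw [pieceSet] at hfv
  rw [pieceSet] at hfw
  have hfv' : f ∈ cyl θ (extv θ v) := by
    split_ifs at hfv with h1
    · exact hfv
    · exact absurd hfv (Set.notMem_empty f)
  have hfw' : f ∈ cyl θ (extv θ w) := by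
    split_ifs at hfw with h1
    · exact hfw
    · exact absurd hfw (Set.notMem_empty f)
  clear hfv hfw
  have hfv := hfv'
  have hfw := hfw'
  · apply hvw
    funext k
    have hv := hfv k.1 (by omega)
    have hw := hfw k.1 (by omega)
    rw [extv_eq θ v (by omega : k.1 ≤ θ)] at hv
    rw [extv_eq θ w (by omega : k.1 ≤ θ)] at hw
    rw [show (⟨k.1, by omega⟩ : Fin (θ+1)) = k from Fin.ext rfl] at hv hw
    rw [← hv, ← hw]

lemma retSet_eq_iUnion (i q : S) (θ : ℕ) :
    {f : ℕ → S | f θ = q ∧ (θ:ℕ∞) < hit i f} = ⋃ v : Fin (θ+1) → S, pieceSet i q θ v := by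
  ext f
  simp only [Set.mem_setOf_eq, Set.mem_iUnion]
  constructor
  · rintro ⟨hfq, hhit⟩
    have hnr : ∀ m, 1 ≤ m → m ≤ θ → f m ≠ i := by
      intro m h1 h2 hfm
      exact absurd (hit_le_coe_iff.2 ⟨m, h1, h2, hfm⟩) (not_le.2 hhit)
    refine ⟨fun k => f k.1, ?_⟩
    have hc : ∀ k ≤ θ, extv θ (fun k : Fin (θ+1) => f k.1) k = f k := by
      intro k hk
      rw [extv_eq θ _ hk]
    rw [pieceSet, if_pos ⟨by rw [hc θ le_rfl]; exact hfq,
      fun m h1 h2 => by rw [hc m h2]; exact hnr m h1 h2⟩]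
    intro k hk
    rw [hc k hk]
  · rintro ⟨v, hv⟩
    rw [pieceSet] at hv
    split_ifs at hv with hP
    · have hf : ∀ k ≤ θ, f k = extv θ v k := hv
      refine ⟨by rw [hf θ le_rfl]; exact hP.1, ?_⟩
      refine not_le.1 fun hle => ?_
      obtain ⟨m, h1, h2, h3⟩ := hit_le_coe_iff.1 hle
      exact hP.2 m h1 h2 (by rw [← hf m h2]; exact h3)
    · exact absurd hv (Set.notMem_empty f)

theorem map_shift_restrict (i q : S) (θ : ℕ) :
    Measure.map (fun f : ℕ → S => fun k => f (θ + k))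
        ((C.μ i).restrict {f : ℕ → S | f θ = q ∧ (θ:ℕ∞) < hit i f}) =
      (C.μ i {f : ℕ → S | f θ = q ∧ (θ:ℕ∞) < hit i f}) • C.μ q := by
  classical
  haveI := C.isProb i
  haveI := C.isProb q
  set A := {f : ℕ → S | f θ = q ∧ (θ:ℕ∞) < hit i f} with hA
  have hAmeas : MeasurableSet A := by
    have : A = {f : ℕ → S | f θ ∈ ({q} : Set S)} ∩ {f | hit i f ≤ (θ : ℕ∞)}ᶜ := by
      ext f; simp [hA, not_le]
    rw [this]
    have h1 : MeasurableSet {f : ℕ → S | f θ ∈ ({q} : Set S)} :=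
      (measurable_pi_apply θ) (measurableSet_singleton q)
    exact h1.inter (measurableSet_hit_le i θ).compl
  have hshift : Measurable (fun f : ℕ → S => (fun k => f (θ + k))) :=
    measurable_pi_iff.2 fun k => measurable_pi_apply (θ + k)
  haveI : IsFiniteMeasure ((C.μ i).restrict A) := inferInstance
  haveI hmapfin : IsFiniteMeasure
      (Measure.map (fun f : ℕ → S => fun k => f (θ + k)) ((C.μ i).restrict A)) := by
    constructor
    rw [Measure.map_apply hshift MeasurableSet.univ]
    exact lt_of_le_of_lt (measure_mono (Set.subset_univ _)) (measure_lt_top _ _)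
  refine MeasureTheory.ext_of_generate_finite (cylSet S) generateFrom_cylSet
    isPiSystem_cylSet ?_ ?_
  · rintro B ⟨n, t, rfl⟩
    rw [Measure.map_apply hshift (measurableSet_cyl n t),
      Measure.restrict_apply (hshift (measurableSet_cyl n t)), Measure.smul_apply,
      smul_eq_mul]
    by_cases ht : t 0 = q
    · have hdec : (fun f : ℕ → S => fun k => f (θ + k)) ⁻¹' cyl n t ∩ A =
          ⋃ v : Fin (θ+1) → S,
            (pieceSet i q θ v ∩ (fun f : ℕ → S => fun k => f (θ + k)) ⁻¹' cyl n t) := by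
        rw [hA, retSet_eq_iUnion i q θ, Set.inter_iUnion]
        exact Set.iUnion_congr fun v => Set.inter_comm _ _
      rw [hdec]
      rw [measure_iUnion
        (fun v w hvw => ((pieceSet_disjoint i q θ) hvw).mono
          Set.inter_subset_left Set.inter_subset_left)
        (fun v => (measurableSet_pieceSet i q θ v).inter (hshift (measurableSet_cyl n t)))]
      have hμq : C.μ q (cyl n t) = ∏ k ∈ Finset.range n, C.trans (t k) (t (k+1)) := by
        rw [measure_cyl, if_pos ht, one_mul]
      have hterm : ∀ v : Fin (θ+1) → S,
          C.μ i (pieceSet i q θ v ∩ (fun f : ℕ → S => fun k => f (θ + k)) ⁻¹' cyl n t) =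
            C.μ i (pieceSet i q θ v) * C.μ q (cyl n t) := by
        intro v
        rw [pieceSet]
        split_ifs with hP
        · rw [measure_cyl_inter_shift C i θ n (extv θ v) t (by rw [hP.1, ht]), hμq]
        · simp
      rw [tsum_congr hterm, ENNReal.tsum_mul_right]
      congr 1
      rw [hA, retSet_eq_iUnion i q θ,
        measure_iUnion (pieceSet_disjoint i q θ) (measurableSet_pieceSet i q θ)]
    · have hempty : (fun f : ℕ → S => fun k => f (θ + k)) ⁻¹' cyl n t ∩ A = ∅ := by
        ext f
        simp only [Set.mem_inter_iff, Set.mem_preimage, Set.mem_empty_iff_false, iff_false]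
        rintro ⟨h1, h2, -⟩
        have hft : f θ = t 0 := by simpa using h1 0 (by omega)
        exact ht (by rw [← hft, h2])
      rw [hempty, measure_empty]
      rw [measure_cyl, if_neg ht, zero_mul, mul_zero]
  · rw [Measure.map_apply hshift MeasurableSet.univ, Set.preimage_univ,
      Measure.restrict_apply_univ, Measure.smul_apply, smul_eq_mul, measure_univ, mul_one]


end Cyl


/-- Lemma 9 of the paper, rewritten via `Z_ii − Z_qi = π_i E_q[T_i]`.
With `Ê = E_i[min(T_i, θ)]`,
`1/Ê − π_i = (π_i/Ê) · Σ_{q ≠ i} P_i(X_θ = q, T_i > θ) · E_q[T_i]`. -/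
theorem statement6 {S : Type*} [MeasurableSpace S] [MeasurableSingletonClass S] [Countable S]
    (C : Chain S) (hirr : C.Irreducible) (hrec : C.PositiveRecurrent)
    (i : S) (θ : ℕ) (hθ : 1 ≤ θ) :
    (C.EThat i θ)⁻¹ - C.statPi i =
      C.statPi i / C.EThat i θ *
        ∑' q : {q : S // q ≠ i},
          (C.μ i {f | f θ = (q : S) ∧ (θ : ℕ∞) < hit i f}).toReal * C.ERet (q : S) i := by
  classical
  haveI hPi : IsProbabilityMeasure (C.μ i) := C.isProb i
  set shf : (ℕ → S) → (ℕ → S) := fun f => fun k => f (θ + k) with hshf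
  have hshift : Measurable shf := measurable_pi_iff.2 fun k => measurable_pi_apply (θ + k)
  set N : (ℕ → S) → ℝ≥0∞ := fun f => (((hit i f).toNat : ℕ) : ℝ≥0∞) with hN
  have hNmeas : Measurable N := measurable_comp_hit i (fun c => ((c.toNat : ℕ) : ℝ≥0∞))
  set Tr : (ℕ → S) → ℝ≥0∞ := fun f => ((truncHit i θ f : ℕ) : ℝ≥0∞) with hTr
  have hTrmeas : Measurable Tr :=
    measurable_comp_hit i (fun c => (((min c (θ : ℕ∞)).toNat : ℕ) : ℝ≥0∞))
  set A : S → Set (ℕ → S) := fun q => {f | f θ = q ∧ (θ : ℕ∞) < hit i f} with hA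
  have hAmeas : ∀ q, MeasurableSet (A q) := by
    intro q
    have : A q = {f : ℕ → S | f θ ∈ ({q} : Set S)} ∩ {f | hit i f ≤ (θ : ℕ∞)}ᶜ := by
      ext f; simp [hA, not_le]
    rw [this]
    exact ((measurable_pi_apply θ) (measurableSet_singleton q)).inter
      (measurableSet_hit_le i θ).compl
  have hAdisj : Pairwise (Function.onFun Disjoint A) := by
    intro q q' hqq'
    rw [Function.onFun, Set.disjoint_left]
    rintro f ⟨h1, -⟩ ⟨h2, -⟩
    exact hqq' (by rw [← h1, ← h2])
  have hUnion : {f : ℕ → S | (θ : ℕ∞) < hit i f} = ⋃ q : S, A q := by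
    ext f
    simp only [Set.mem_setOf_eq, Set.mem_iUnion, hA]
    exact ⟨fun h => ⟨f θ, rfl, h⟩, fun ⟨q, _, h⟩ => h⟩
  have hUnionMeas : MeasurableSet {f : ℕ → S | (θ : ℕ∞) < hit i f} := by
    have : {f : ℕ → S | (θ : ℕ∞) < hit i f} = {f | hit i f ≤ (θ : ℕ∞)}ᶜ := by
      ext f; simp [not_le]
    rw [this]; exact (measurableSet_hit_le i θ).compl
  -- a.e. decomposition
  have hfin : ∀ᵐ f ∂ C.μ i, hit i f ≠ ⊤ := by
    rw [ae_iff]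
    simpa using (hrec i).1
  have hdec : ∀ᵐ f ∂ C.μ i, N f = Tr f +
      Set.indicator {g : ℕ → S | (θ : ℕ∞) < hit i g} (fun g => N (shf g)) f := by
    filter_upwards [hfin] with f hf
    exact N_decomp hθ hf
  -- the lintegral identity
  have hmain : ∫⁻ f, N f ∂ C.μ i =
      (∫⁻ f, Tr f ∂ C.μ i) + ∑' q : S, C.μ i (A q) * ∫⁻ f, N f ∂ C.μ q := by
    rw [lintegral_congr_ae hdec, lintegral_add_left hTrmeas]
    congr 1
    rw [lintegral_indicator hUnionMeas]
    rw [hUnion, lintegral_iUnion hAmeas hAdisj]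
    refine tsum_congr fun q => ?_
    have h1 : ∫⁻ f in A q, N (shf f) ∂ C.μ i = ∫⁻ g, N g ∂ (Measure.map shf ((C.μ i).restrict (A q))) := by
      rw [lintegral_map hNmeas hshift]
    rw [h1, hshf, hA]
    rw [map_shift_restrict C i q θ]
    rw [lintegral_smul_measure, smul_eq_mul]
  -- finiteness facts
  set L : ℝ≥0∞ := ∫⁻ f, N f ∂ C.μ i with hL
  set Lh : ℝ≥0∞ := ∫⁻ f, Tr f ∂ C.μ i with hLh
  set T : ℝ≥0∞ := ∑' q : S, C.μ i (A q) * ∫⁻ f, N f ∂ C.μ q with hT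
  have hLfin : L ≠ ⊤ := by
    have hint := (hrec i).2
    have := hint.lintegral_lt_top
    have heq : ∀ f : ℕ → S, ENNReal.ofReal (((hit i f).toNat : ℝ)) = N f := fun f =>
      ENNReal.ofReal_natCast _
    rw [hL]
    rw [← lintegral_congr fun f => (heq f)]
    exact this.ne
  have hTfin : T ≠ ⊤ := by
    intro hc
    have h2 : L = ⊤ := by rw [hmain, hc, add_top]
    exact hLfin h2
  have hLhle : Lh ≤ (θ : ℝ≥0∞) := by
    calc Lh ≤ ∫⁻ _, (θ : ℝ≥0∞) ∂ C.μ i := lintegral_mono fun f => by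
            exact_mod_cast Nat.cast_le.2 (truncHit_le)
      _ = (θ : ℝ≥0∞) := by rw [lintegral_const, measure_univ, mul_one]
  have hLhfin : Lh ≠ ⊤ := ne_top_of_le_ne_top (by simp) hLhle
  have hLhpos : 1 ≤ Lh := by
    calc (1 : ℝ≥0∞) = ∫⁻ _, 1 ∂ C.μ i := by rw [lintegral_one, measure_univ]
      _ ≤ Lh := lintegral_mono fun f => by
            exact_mod_cast Nat.one_le_cast.2 (one_le_truncHit hθ)
  -- conversions to real integrals
  have hconv : ∀ x : S, C.ERet x i = (∫⁻ f, N f ∂ C.μ x).toReal := by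
    intro x
    rw [Chain.ERet, integral_eq_lintegral_of_nonneg_ae (ae_of_all _ fun f => by positivity)
      (measurable_comp_hit i (fun c => ((c.toNat : ℕ) : ℝ))).aestronglyMeasurable]
    congr 1
    exact lintegral_congr fun f => ENNReal.ofReal_natCast _
  have hconvT : C.EThat i θ = Lh.toReal := by
    have hm : Measurable fun f : ℕ → S => ((truncHit i θ f : ℕ) : ℝ) :=
      measurable_comp_hit i (fun c => (((min c (θ : ℕ∞)).toNat : ℕ) : ℝ))
    rw [Chain.EThat, integral_eq_lintegral_of_nonneg_ae (ae_of_all _ fun f => by positivity)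
      hm.aestronglyMeasurable]
    congr 1
    exact lintegral_congr fun f => ENNReal.ofReal_natCast _
  -- the i-th term vanishes
  have hAi : A i = ∅ := by
    ext f
    simp only [hA, Set.mem_setOf_eq, Set.mem_empty_iff_false, iff_false, not_and]
    intro hfθ hlt
    exact absurd (hit_le_coe_iff.2 ⟨θ, hθ, le_rfl, hfθ⟩) (not_le.2 hlt)
  -- rewrite the subtype tsum as a full tsum
  set g : S → ℝ := fun q => (C.μ i (A q)).toReal * C.ERet q i with hg
  have hsub : ∑' q : {q : S // q ≠ i},
      (C.μ i {f | f θ = (q : S) ∧ (θ : ℕ∞) < hit i f}).toReal * C.ERet (q : S) i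
        = ∑' q : S, g q := by
    have hsupp : Function.support g ⊆ {q : S | q ≠ i} := by
      intro q hq
      simp only [Set.mem_setOf_eq]
      rintro rfl
      apply hq
      rw [hg]
      simp [hAi]
    exact tsum_subtype_eq_of_support_subset hsupp
  rw [hsub]
  -- term-wise finiteness in T
  have htermfin : ∀ q : S, C.μ i (A q) * ∫⁻ f, N f ∂ C.μ q ≠ ⊤ := by
    intro q hc
    exact hTfin (by rw [hT]; exact ENNReal.tsum_eq_top_of_eq_top ⟨q, hc⟩)
  have hgT : ∑' q : S, g q = T.toReal := by
    rw [hT, ENNReal.tsum_toReal_eq htermfin]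
    refine tsum_congr fun q => ?_
    simp only [hg, ENNReal.toReal_mul]
    rw [hconv q]
  rw [hgT]
  -- final algebra
  have hE : C.ERet i i = L.toReal := hconv i
  have hEsplit : L.toReal = Lh.toReal + T.toReal := by
    rw [hmain]
    exact ENNReal.toReal_add hLhfin hTfin
  have hEhpos : (0 : ℝ) < Lh.toReal := by
    have : (1 : ℝ) ≤ Lh.toReal := by
      have := ENNReal.toReal_mono hLhfin hLhpos
      simpa using this
    linarith
  have hTnonneg : (0 : ℝ) ≤ T.toReal := ENNReal.toReal_nonneg
  have hEpos : (0 : ℝ) < L.toReal := by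
    rw [hEsplit]; linarith
  rw [Chain.statPi, hE, hconvT]
  rw [show T.toReal = L.toReal - Lh.toReal by rw [hEsplit]; ring]
  field_simp


end

end LocalStationary
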